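/- Given a dry mass m_d > 0 and stage masses m_1, ..., m_N > 0, the staging order maximizing total flight time T(σ) = Σ_{i=1}^N m_{σ(i)} * (m_d + Σ_{j=i}^N m_{σ(j)})^{-3/2} over permutations σ is the decreasing order: any maximizing permutation σ satisfies m_{σ(1)} ≥ m_{σ(2)} ≥ ... ≥ m_{σ(N)}. -/

import Mathlib

open Real Set

lemma strictConvexOn_rpow_neg32 :
    StrictConvexOn ℝ (Set.Ioi (0:ℝ)) (fun x : ℝ => x ^ (-(3:ℝ)/2)) := by
  apply strictConvexOn_of_deriv2_pos (convex_Ioi 0)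
  · exact fun x hx =>
      (Real.continuousAt_rpow_const x _ (Or.inl (ne_of_gt hx))).continuousWithinAt
  · intro x hx
    rw [interior_Ioi] at hx
    have heq : deriv (fun x : ℝ => x ^ (-(3:ℝ)/2)) =ᶠ[nhds x]
        fun y => (-(3:ℝ)/2) * y ^ (-(3:ℝ)/2 - 1) := by
      filter_upwards [Ioi_mem_nhds hx] with y hy
      exact Real.deriv_rpow_const y _
    have h2 : deriv^[2] (fun x : ℝ => x ^ (-(3:ℝ)/2)) x
        = deriv (fun y : ℝ => (-(3:ℝ)/2) * y ^ (-(3:ℝ)/2 - 1)) x := by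
      show deriv (deriv _) x = _
      exact heq.deriv_eq
    rw [h2, deriv_const_mul _ ((Real.hasDerivAt_rpow_const (Or.inl (ne_of_gt hx))).differentiableAt),
      Real.deriv_rpow_const x _]
    have := Real.rpow_pos_of_pos hx (-(3:ℝ)/2 - 1 - 1)
    nlinarith

lemma key_ineq {a b S : ℝ} (ha : 0 < a) (hab : a < b) (hSb : b < S) :
    b * (S - a) ^ (-(3:ℝ)/2) < (b - a) * S ^ (-(3:ℝ)/2) + a * (S - b) ^ (-(3:ℝ)/2) := by
  have hb : 0 < b := ha.trans hab
  have hS : 0 < S := hb.trans hSb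
  have hSb' : 0 < S - b := by linarith
  have hP : 0 < 1 - a/b := by
    rw [sub_pos, div_lt_one hb]; exact hab
  have hQ : 0 < a/b := div_pos ha hb
  have hne : S ≠ S - b := by intro h; linarith
  have h := strictConvexOn_rpow_neg32.2 (Set.mem_Ioi.2 hS) (Set.mem_Ioi.2 hSb') hne hP hQ
    (by ring)
  simp only [smul_eq_mul] at h
  have hcomb : (1 - a/b) * S + a/b * (S - b) = S - a := by
    field_simp; ring
  rw [hcomb] at h
  have := mul_lt_mul_of_pos_left h hb
  calc b * (S - a) ^ (-(3:ℝ)/2) < b * ((1 - a/b) * S ^ (-(3:ℝ)/2) + a/b * (S - b) ^ (-(3:ℝ)/2)) := this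
    _ = (b - a) * S ^ (-(3:ℝ)/2) + a * (S - b) ^ (-(3:ℝ)/2) := by field_simp

/-- Any staging order maximizing the total flight time stages the batteries
in order of decreasing mass. -/
theorem optimal_staging_order_is_decreasing
    (N : ℕ) (m_d : ℝ) (hmd : 0 < m_d) (m : Fin N → ℝ) (hm : ∀ i, 0 < m i)
    (σ : Equiv.Perm (Fin N))
    (hopt : ∀ τ : Equiv.Perm (Fin N),
      (∑ i, m (τ i) * (m_d + ∑ j ∈ Finset.Ici i, m (τ j)) ^ (-(3 : ℝ) / 2)) ≤
      (∑ i, m (σ i) * (m_d + ∑ j ∈ Finset.Ici i, m (σ j)) ^ (-(3 : ℝ) / 2))) :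
    ∀ i j : Fin N, i ≤ j → m (σ j) ≤ m (σ i) := by
  have adj : ∀ (k : ℕ) (hk : k + 1 < N),
      m (σ ⟨k+1, hk⟩) ≤ m (σ ⟨k, Nat.lt_of_succ_lt hk⟩) := by
    intro k hk
    by_contra hcon
    push_neg at hcon
    set K : Fin N := ⟨k, Nat.lt_of_succ_lt hk⟩ with hKdef
    set K' : Fin N := ⟨k+1, hk⟩ with hK'def
    have hKK' : K ≠ K' := by
      simp only [hKdef, hK'def, ne_eq, Fin.mk.injEq]; omega
    have hKltK' : K < K' := by
      rw [Fin.lt_def]; simp [hKdef, hK'def]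
    set τ : Equiv.Perm (Fin N) := σ * Equiv.swap K K' with hτ
    have hτapp : ∀ i, τ i = σ (Equiv.swap K K' i) := fun i => rfl
    -- swapping preserves suffix sums for indices ≤ K
    have hswap_mem : ∀ i j : Fin N, i ≤ K → i ≤ j → i ≤ Equiv.swap K K' j := by
      intro i j hiK hij
      rcases eq_or_ne j K with rfl | hjK
      · rw [Equiv.swap_apply_left]; exact hiK.trans hKltK'.le
      rcases eq_or_ne j K' with rfl | hjK'
      · rw [Equiv.swap_apply_right]; exact hiK
      · rw [Equiv.swap_apply_of_ne_of_ne hjK hjK']; exact hij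
    have hsum_le : ∀ i : Fin N, i ≤ K →
        ∑ j ∈ Finset.Ici i, m (τ j) = ∑ j ∈ Finset.Ici i, m (σ j) := by
      intro i hiK
      refine Finset.sum_equiv (Equiv.swap K K') (fun j => ?_) (fun j _ => by
        rw [hτapp])
      simp only [Finset.mem_Ici]
      constructor
      · intro h; exact hswap_mem i j hiK h
      · intro h
        have h2 := hswap_mem i _ hiK h
        rwa [Equiv.swap_apply_self] at h2
    -- swapping preserves suffix sums for indices > K'
    have hsum_gt : ∀ i : Fin N, K' < i →
        ∑ j ∈ Finset.Ici i, m (τ j) = ∑ j ∈ Finset.Ici i, m (σ j) := by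
      intro i hi
      refine Finset.sum_congr rfl (fun j hj => ?_)
      rw [Finset.mem_Ici] at hj
      have hK'j : K' < j := lt_of_lt_of_le hi hj
      have hjK : j ≠ K := (hKltK'.trans hK'j).ne'
      have hjK' : j ≠ K' := hK'j.ne'
      rw [hτapp, Equiv.swap_apply_of_ne_of_ne hjK hjK']
    -- terms away from K, K' coincide
    have term_eq : ∀ i : Fin N, i ≠ K → i ≠ K' →
        m (τ i) * (m_d + ∑ j ∈ Finset.Ici i, m (τ j)) ^ (-(3 : ℝ) / 2)
        = m (σ i) * (m_d + ∑ j ∈ Finset.Ici i, m (σ j)) ^ (-(3 : ℝ) / 2) := by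
      intro i hiK hiK'
      have hmi : τ i = σ i := by
        rw [hτapp, Equiv.swap_apply_of_ne_of_ne hiK hiK']
      rcases le_or_gt i K with h | h
      · rw [hmi, hsum_le i h]
      · have hK'i : K' < i := by
          rw [Fin.lt_def]
          have h1 : (K : ℕ) < (i : ℕ) := h
          have h2 : (i : ℕ) ≠ (K' : ℕ) := fun he => hiK' (Fin.ext he)
          simp only [hKdef, hK'def] at h1 h2 ⊢
          omega
        rw [hmi, hsum_gt i hK'i]
    -- abbreviations
    set a := m (σ K) with hadef
    set b := m (σ K') with hbdef
    set B := ∑ j ∈ Finset.Ici K', m (σ j) with hBdef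
    have hIci : Finset.Ici K = insert K (Finset.Ici K') := by
      ext j
      simp only [Finset.mem_Ici, Finset.mem_insert, Fin.le_def, Fin.ext_iff,
        hKdef, hK'def]
      omega
    have hKnot : K ∉ Finset.Ici K' := by
      simp only [Finset.mem_Ici]
      exact hKltK'.not_ge
    have hsumK : ∑ j ∈ Finset.Ici K, m (σ j) = a + B := by
      rw [hIci, Finset.sum_insert hKnot]
    have hbB : b ≤ B :=
      Finset.single_le_sum (fun j _ => (hm (σ j)).le) (Finset.mem_Ici.2 le_rfl)
    have hτK : m (τ K) = b := by rw [hτapp, Equiv.swap_apply_left]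
    have hτK' : m (τ K') = a := by rw [hτapp, Equiv.swap_apply_right]
    have hSτK : ∑ j ∈ Finset.Ici K, m (τ j) = a + B := by
      rw [hsum_le K le_rfl, hsumK]
    have hSτK' : ∑ j ∈ Finset.Ici K', m (τ j) = a + B - b := by
      have h1 : ∑ j ∈ Finset.Ici K, m (τ j)
          = m (τ K) + ∑ j ∈ Finset.Ici K', m (τ j) := by
        rw [hIci, Finset.sum_insert hKnot]
      rw [hSτK, hτK] at h1
      linarith
    -- the swapped permutation is strictly better
    have hsplit : ∑ i : Fin N,
        (m (τ i) * (m_d + ∑ j ∈ Finset.Ici i, m (τ j)) ^ (-(3 : ℝ) / 2)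
          - m (σ i) * (m_d + ∑ j ∈ Finset.Ici i, m (σ j)) ^ (-(3 : ℝ) / 2))
        = ∑ i ∈ ({K, K'} : Finset (Fin N)),
        (m (τ i) * (m_d + ∑ j ∈ Finset.Ici i, m (τ j)) ^ (-(3 : ℝ) / 2)
          - m (σ i) * (m_d + ∑ j ∈ Finset.Ici i, m (σ j)) ^ (-(3 : ℝ) / 2)) := by
      refine (Finset.sum_subset (Finset.subset_univ _) ?_).symm
      intro i _ hi
      simp only [Finset.mem_insert, Finset.mem_singleton, not_or] at hi
      rw [term_eq i hi.1 hi.2, sub_self]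
    have hlt : (∑ i, m (σ i) * (m_d + ∑ j ∈ Finset.Ici i, m (σ j)) ^ (-(3 : ℝ) / 2)) <
        (∑ i, m (τ i) * (m_d + ∑ j ∈ Finset.Ici i, m (τ j)) ^ (-(3 : ℝ) / 2)) := by
      rw [← sub_pos, ← Finset.sum_sub_distrib, hsplit, Finset.sum_pair hKK',
        hτK, hτK', hSτK, hSτK', hsumK]
      have ha : 0 < a := hadef ▸ hm (σ K)
      have hk2 := key_ineq (hm (σ K)) hcon
        (show b < m_d + (a + B) by linarith)
      have e1 : m_d + (a + B) - a = m_d + B := by ring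
      have e2 : m_d + (a + B) - b = m_d + (a + B - b) := by ring
      rw [e1, e2, sub_mul] at hk2
      linarith
    exact absurd (hopt τ) (not_le.2 hlt)
  -- from adjacent decrease to full monotonicity
  have step : ∀ (d : ℕ) (i j : Fin N), (j : ℕ) = (i : ℕ) + d → m (σ j) ≤ m (σ i) := by
    intro d
    induction d with
    | zero =>
      intro i j h
      have : j = i := Fin.ext (by omega)
      rw [this]
    | succ d ih =>
      intro i j h
      have hk : (i : ℕ) + d + 1 < N := by omega
      have hj' : (i : ℕ) + d < N := Nat.lt_of_succ_lt hk
      have h1 : m (σ j) ≤ m (σ ⟨(i : ℕ) + d, hj'⟩) := by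
        have hje : j = ⟨(i : ℕ) + d + 1, hk⟩ := Fin.ext (by show (j : ℕ) = (i : ℕ) + d + 1; omega)
        rw [hje]
        exact adj ((i : ℕ) + d) hk
      exact h1.trans (ih i ⟨(i : ℕ) + d, hj'⟩ rfl)
  intro i j hij
  have hij' : (i : ℕ) ≤ (j : ℕ) := hij
  exact step ((j : ℕ) - (i : ℕ)) i j (by omega)
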